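/- Let f(x) ∈ ℂ[x] be a polynomial of degree 6 without multiple roots. Then there are only finitely many pairs of polynomials (P, Q) with deg P ≤ 3, deg Q ≤ 2 such that f = P² − Q³. -/

import Mathlib

open Polynomial

noncomputable section
namespace Stmt1Aux

abbrev σ7 := Sum (Fin 4) (Fin 3)
abbrev R7 := MvPolynomial σ7 ℂ

variable {B B₂ : Type*} [CommRing B] [CommRing B₂]

def genP (v : σ7 → B) : Polynomial B := ∑ i : Fin 4, C (v (Sum.inl i)) * X ^ (i : ℕ)
def genQ (v : σ7 → B) : Polynomial B := ∑ j : Fin 3, C (v (Sum.inr j)) * X ^ (j : ℕ)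

lemma map_genP (ψ : B →+* B₂) (v : σ7 → B) :
    (genP v).map ψ = genP (fun s => ψ (v s)) := by
  simp [genP, Polynomial.map_sum]

lemma map_genQ (ψ : B →+* B₂) (v : σ7 → B) :
    (genQ v).map ψ = genQ (fun s => ψ (v s)) := by
  simp [genQ, Polynomial.map_sum]

lemma genP_add (v w : σ7 → B) : genP (fun s => v s + w s) = genP v + genP w := by
  simp [genP, add_mul, Finset.sum_add_distrib]

lemma genQ_add (v w : σ7 → B) : genQ (fun s => v s + w s) = genQ v + genQ w := by
  simp [genQ, add_mul, Finset.sum_add_distrib]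

lemma coeff_genP (v : σ7 → B) (n : ℕ) :
    (genP v).coeff n = if h : n < 4 then v (Sum.inl ⟨n, h⟩) else 0 := by
  rw [genP, finset_sum_coeff]
  simp only [coeff_C_mul, coeff_X_pow]
  split_ifs with h
  · rw [Finset.sum_eq_single (⟨n, h⟩ : Fin 4)]
    · simp
    · intro b _ hb
      have : n ≠ (b : ℕ) := by intro he; apply hb; ext; simp [he]
      simp [this]
    · simp
  · apply Finset.sum_eq_zero
    intro b _
    have : n ≠ (b : ℕ) := by omega
    simp [this]

lemma coeff_genQ (v : σ7 → B) (n : ℕ) :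
    (genQ v).coeff n = if h : n < 3 then v (Sum.inr ⟨n, h⟩) else 0 := by
  rw [genQ, finset_sum_coeff]
  simp only [coeff_C_mul, coeff_X_pow]
  split_ifs with h
  · rw [Finset.sum_eq_single (⟨n, h⟩ : Fin 3)]
    · simp
    · intro b _ hb
      have : n ≠ (b : ℕ) := by intro he; apply hb; ext; simp [he]
      simp [this]
    · simp
  · apply Finset.sum_eq_zero
    intro b _
    have : n ≠ (b : ℕ) := by omega
    simp [this]

lemma natDegree_genP_le (v : σ7 → B) : (genP v).natDegree ≤ 3 := by
  apply natDegree_le_iff_coeff_eq_zero.mpr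
  intro n hn
  rw [coeff_genP]
  have : ¬ n < 4 := by omega
  simp [this]

lemma natDegree_genQ_le (v : σ7 → B) : (genQ v).natDegree ≤ 2 := by
  apply natDegree_le_iff_coeff_eq_zero.mpr
  intro n hn
  rw [coeff_genQ]
  have : ¬ n < 3 := by omega
  simp [this]

lemma genP_eq (P : Polynomial B) (h : P.natDegree ≤ 3) (v : σ7 → B)
    (hv : ∀ i : Fin 4, v (Sum.inl i) = P.coeff i) : genP v = P := by
  ext n
  rw [coeff_genP]
  split_ifs with hn
  · exact hv ⟨n, hn⟩
  · exact (coeff_eq_zero_of_natDegree_lt (by omega)).symm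

lemma genQ_eq (Q : Polynomial B) (h : Q.natDegree ≤ 2) (v : σ7 → B)
    (hv : ∀ j : Fin 3, v (Sum.inr j) = Q.coeff j) : genQ v = Q := by
  ext n
  rw [coeff_genQ]
  split_ifs with hn
  · exact hv ⟨n, hn⟩
  · exact (coeff_eq_zero_of_natDegree_lt (by omega)).symm

lemma genP_mul_genP_eq_zero (v w : σ7 → B) (h : ∀ s t, v s * w t = 0) :
    genP v * genP w = 0 := by
  rw [genP, genP, Finset.sum_mul_sum]
  apply Finset.sum_eq_zero; intro i _
  apply Finset.sum_eq_zero; intro j _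
  rw [show (C (v (Sum.inl i)) * X ^ (i:ℕ)) * (C (w (Sum.inl j)) * X ^ (j:ℕ))
      = C (v (Sum.inl i) * w (Sum.inl j)) * (X ^ (i:ℕ) * X ^ (j:ℕ)) by rw [C_mul]; ring]
  rw [h, C_0, zero_mul]

lemma genQ_mul_genQ_eq_zero (v w : σ7 → B) (h : ∀ s t, v s * w t = 0) :
    genQ v * genQ w = 0 := by
  rw [genQ, genQ, Finset.sum_mul_sum]
  apply Finset.sum_eq_zero; intro i _
  apply Finset.sum_eq_zero; intro j _
  rw [show (C (v (Sum.inr i)) * X ^ (i:ℕ)) * (C (w (Sum.inr j)) * X ^ (j:ℕ))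
      = C (v (Sum.inr i) * w (Sum.inr j)) * (X ^ (i:ℕ) * X ^ (j:ℕ)) by rw [C_mul]; ring]
  rw [h, C_0, zero_mul]

lemma lam_mul_coeff [Algebra ℂ B] (A : Polynomial ℂ) (Z : Polynomial B) (Zl : Polynomial ℂ)
    (lam : B →ₗ[ℂ] ℂ) (h : ∀ n, Zl.coeff n = lam (Z.coeff n)) (k : ℕ) :
    (A * Zl).coeff k = lam ((A.map (algebraMap ℂ B) * Z).coeff k) := by
  rw [coeff_mul, coeff_mul, map_sum]
  apply Finset.sum_congr rfl
  intro p _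
  rw [h, coeff_map, ← Algebra.smul_def, map_smul, smul_eq_mul]

open MvPolynomial in
lemma sub_C_eval_mem_span {σ kk : Type*} [CommRing kk] (x : σ → kk) (F : MvPolynomial σ kk) :
    F - MvPolynomial.C (MvPolynomial.eval x F) ∈
      Ideal.span (Set.range fun s => (MvPolynomial.X s - MvPolynomial.C (x s) : MvPolynomial σ kk)) := by
  induction F using MvPolynomial.induction_on with
  | C a => simp
  | add p q hp hq =>
      have : p + q - MvPolynomial.C (MvPolynomial.eval x (p + q)) =
          (p - MvPolynomial.C (MvPolynomial.eval x p)) + (q - MvPolynomial.C (MvPolynomial.eval x q)) := by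
        rw [map_add, map_add]; ring
      rw [this]
      exact Ideal.add_mem _ hp hq
  | mul_X p n hp =>
      have : p * MvPolynomial.X n - MvPolynomial.C (MvPolynomial.eval x (p * MvPolynomial.X n)) =
          (p - MvPolynomial.C (MvPolynomial.eval x p)) * MvPolynomial.X n
          + MvPolynomial.C (MvPolynomial.eval x p) * (MvPolynomial.X n - MvPolynomial.C (x n)) := by
        rw [map_mul, MvPolynomial.eval_X, map_mul]; ring
      rw [this]
      exact Ideal.add_mem _ (Ideal.mul_mem_right _ _ hp)
        (Ideal.mul_mem_left _ _ (Ideal.subset_span ⟨n, rfl⟩))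

lemma ker_eval_le_span {σ kk : Type*} [CommRing kk] (x : σ → kk) :
    RingHom.ker (MvPolynomial.eval x) ≤
      Ideal.span (Set.range fun s => (MvPolynomial.X s - MvPolynomial.C (x s) : MvPolynomial σ kk)) := by
  intro F hF
  have h0 : MvPolynomial.eval x F = 0 := hF
  have := sub_C_eval_mem_span x F
  rwa [h0, map_zero, sub_zero] at this

/-- the universal polynomial `P² - Q³ - f` -/
def bigG (f : Polynomial ℂ) : Polynomial R7 :=
  (genP MvPolynomial.X) ^ 2 - (genQ MvPolynomial.X) ^ 3 - f.map (algebraMap ℂ R7)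

/-- ideal of coefficients of `bigG` -/
def bigI (f : Polynomial ℂ) : Ideal R7 :=
  Ideal.span (Set.range fun k : ℕ => (bigG f).coeff k)

lemma map_bigG [Algebra ℂ B] (f : Polynomial ℂ) (ψ : R7 →+* B)
    (hψ : ∀ c, ψ (MvPolynomial.C c) = algebraMap ℂ B c) :
    (bigG f).map ψ = (genP (fun s => ψ (MvPolynomial.X s))) ^ 2
      - (genQ (fun s => ψ (MvPolynomial.X s))) ^ 3 - f.map (algebraMap ℂ B) := by
  rw [bigG, Polynomial.map_sub, Polynomial.map_sub, Polynomial.map_pow, Polynomial.map_pow,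
    map_genP, map_genQ, Polynomial.map_map]
  congr 2
  apply RingHom.ext
  intro c
  rw [RingHom.comp_apply, MvPolynomial.algebraMap_eq, hψ]

open MvPolynomial in
/-- the point in ℂ⁷ associated to a pair (P,Q) -/
def pt (P Q : Polynomial ℂ) : σ7 → ℂ := Sum.elim (fun i => P.coeff i) (fun j => Q.coeff j)

lemma heart (f P Q Pd Qd : Polynomial ℂ) (hdeg : f.natDegree = 6) (hsf : Squarefree f)
    (hP : P.natDegree ≤ 3) (hQ : Q.natDegree ≤ 2) (hPd : Pd.natDegree ≤ 3)
    (hQd : Qd.natDegree ≤ 2) (hf : f = P ^ 2 - Q ^ 3)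
    (key : 2 * P * Pd = 3 * Q ^ 2 * Qd) : Pd = 0 ∧ Qd = 0 := by
  classical
  have hf0 : f ≠ 0 := by intro h; rw [h] at hdeg; simp at hdeg
  have hPne : P ≠ 0 := by
    intro h
    rw [h] at hf
    have hQne : Q ≠ 0 := by intro h'; rw [h'] at hf; simp at hf; exact hf0 (by simpa using hf)
    have hdQ : Q.natDegree = 2 := by
      have : f.natDegree = 3 * Q.natDegree := by
        rw [hf]; simp [natDegree_neg, natDegree_pow]
      omega
    have : IsUnit Q := hsf Q ⟨-Q, by rw [hf]; ring⟩
    have := natDegree_eq_zero_of_isUnit this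
    omega
  have hQne : Q ≠ 0 := by
    intro h
    rw [h] at hf
    have : IsUnit P := hsf P ⟨1, by rw [hf]; ring⟩
    have := natDegree_eq_zero_of_isUnit this
    have : f.natDegree = 2 * P.natDegree := by rw [hf]; simp [natDegree_pow]
    omega
  have hcop : IsCoprime P Q := by
    rw [← EuclideanDomain.gcd_isUnit_iff]
    apply hsf
    have h1 : EuclideanDomain.gcd P Q ∣ P := EuclideanDomain.gcd_dvd_left P Q
    have h2 : EuclideanDomain.gcd P Q ∣ Q := EuclideanDomain.gcd_dvd_right P Q
    have : EuclideanDomain.gcd P Q * EuclideanDomain.gcd P Q ∣ P ^ 2 - Q ^ 3 := by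
      apply dvd_sub
      · exact (show P^2 = P*P by ring) ▸ mul_dvd_mul h1 h1
      · exact (show Q^3 = Q*Q*Q by ring) ▸ dvd_mul_of_dvd_left (mul_dvd_mul h2 h2) Q
    rwa [← hf] at this
  rcases eq_or_lt_of_le hP with h3 | h3
  · have hQd0 : Qd = 0 := by
      by_contra hne
      have hdvd : P ∣ Q ^ 2 * (3 * Qd) := by
        rw [show Q ^ 2 * (3 * Qd) = 3 * Q ^ 2 * Qd by ring, ← key]
        exact ⟨2 * Pd, by ring⟩
      have hdvd2 : P ∣ 3 * Qd := (hcop.pow_right).dvd_of_dvd_mul_left hdvd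
      have h30 : (3 : Polynomial ℂ) * Qd ≠ 0 := by
        apply mul_ne_zero _ hne; norm_num
      have := natDegree_le_of_dvd hdvd2 h30
      have h3d : ((3 : Polynomial ℂ) * Qd).natDegree ≤ 2 := by
        rw [natDegree_mul (by norm_num) hne]
        simpa using hQd
      omega
    refine ⟨?_, hQd0⟩
    rw [hQd0, mul_zero] at key
    rcases mul_eq_zero.mp key with h | h
    · rcases mul_eq_zero.mp h with h' | h'
      · norm_num at h'
      · exact absurd h' hPne
    · exact h
  · have hP2 : P.natDegree ≤ 2 := by omega
    have hdQ : Q.natDegree = 2 := by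
      have h1 : (P ^ 2).natDegree ≤ 4 := by
        rw [natDegree_pow]; omega
      have h2 : (f - P ^ 2).natDegree = 6 := by
        rw [natDegree_sub_eq_left_of_natDegree_lt (by omega), hdeg]
      have h3 : f - P ^ 2 = -(Q ^ 3) := by rw [hf]; ring
      rw [h3, natDegree_neg, natDegree_pow] at h2
      omega
    have hPd0 : Pd = 0 := by
      by_contra hne
      have hdvd : Q ^ 2 ∣ P * (2 * Pd) := by
        rw [show P * (2 * Pd) = 2 * P * Pd by ring, key]
        exact ⟨3 * Qd, by ring⟩
      have hdvd2 : Q ^ 2 ∣ 2 * Pd := (hcop.symm.pow_left).dvd_of_dvd_mul_left hdvd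
      have h20 : (2 : Polynomial ℂ) * Pd ≠ 0 := by
        apply mul_ne_zero _ hne; norm_num
      have := natDegree_le_of_dvd hdvd2 h20
      have h2d : ((2 : Polynomial ℂ) * Pd).natDegree ≤ 3 := by
        rw [natDegree_mul (by norm_num) hne]
        simpa using hPd
      rw [natDegree_pow, hdQ] at this
      omega
    refine ⟨hPd0, ?_⟩
    rw [hPd0, mul_zero] at key
    rcases mul_eq_zero.mp key.symm with h | h
    · rcases mul_eq_zero.mp h with h' | h'
      · norm_num at h'
      · exact absurd (pow_eq_zero_iff (by norm_num)|>.mp h') hQne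
    · exact h

variable (f P Q : Polynomial ℂ)

lemma genP_pt (hP : P.natDegree ≤ 3) : genP (pt P Q) = P :=
  genP_eq P hP _ (fun _ => rfl)

lemma genQ_pt (hQ : Q.natDegree ≤ 2) : genQ (pt P Q) = Q :=
  genQ_eq Q hQ _ (fun _ => rfl)

lemma map_eval_bigG (hP : P.natDegree ≤ 3) (hQ : Q.natDegree ≤ 2)
    (hf : f = P ^ 2 - Q ^ 3) :
    (bigG f).map (MvPolynomial.eval (pt P Q)) = 0 := by
  rw [map_bigG f _ (fun c => by simp [MvPolynomial.eval_C, Algebra.algebraMap_self])]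
  simp only [MvPolynomial.eval_X]
  rw [show (fun s => pt P Q s) = pt P Q from rfl, genP_pt P Q hP, genQ_pt P Q hQ,
    Algebra.algebraMap_self, Polynomial.map_id, ← hf]
  ring

lemma bigI_le_ker (hP : P.natDegree ≤ 3) (hQ : Q.natDegree ≤ 2)
    (hf : f = P ^ 2 - Q ^ 3) :
    bigI f ≤ RingHom.ker (MvPolynomial.eval (pt P Q)) := by
  rw [bigI, Ideal.span_le]
  rintro g ⟨k, rfl⟩
  simp only [SetLike.mem_coe, RingHom.mem_ker]
  have : MvPolynomial.eval (pt P Q) ((bigG f).coeff k)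
      = ((bigG f).map (MvPolynomial.eval (pt P Q))).coeff k := (coeff_map _ _).symm
  rw [this, map_eval_bigG f P Q hP hQ hf, coeff_zero]

set_option maxHeartbeats 2000000 in
set_option synthInstance.maxHeartbeats 1000000 in
lemma ker_le_sup (hdeg : f.natDegree = 6) (hsf : Squarefree f)
    (hP : P.natDegree ≤ 3) (hQ : Q.natDegree ≤ 2) (hf : f = P ^ 2 - Q ^ 3) :
    RingHom.ker (MvPolynomial.eval (pt P Q)) ≤
      bigI f ⊔ (RingHom.ker (MvPolynomial.eval (pt P Q))) ^ 2 := by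
  set x := pt P Q with hx
  set m : Ideal R7 := RingHom.ker (MvPolynomial.eval x) with hmdef
  set J : Ideal R7 := bigI f ⊔ m ^ 2 with hJdef
  have hmem : ∀ s, MvPolynomial.X s - MvPolynomial.C (x s) ∈ m := fun s => by
    rw [hmdef, RingHom.mem_ker, map_sub, MvPolynomial.eval_X, MvPolynomial.eval_C, sub_self]
  set π : R7 →+* R7 ⧸ J := Ideal.Quotient.mk J with hπdef
  set ε : σ7 → R7 ⧸ J := fun s => π (MvPolynomial.X s - MvPolynomial.C (x s)) with hεdef
  suffices h : ∀ s : σ7, ε s = 0 by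
    refine le_trans (ker_eval_le_span x) ?_
    rw [Ideal.span_le]
    rintro g ⟨s, rfl⟩
    have := Ideal.Quotient.eq_zero_iff_mem.mp (h s)
    exact this
  have hε : ∀ s t, ε s * ε t = 0 := fun s t => by
    rw [hεdef]
    simp only
    rw [← map_mul, Ideal.Quotient.eq_zero_iff_mem]
    refine (le_sup_right : m ^ 2 ≤ J) ?_
    rw [pow_two]
    exact Ideal.mul_mem_mul (hmem s) (hmem t)
  have halg : ∀ c : ℂ, π (MvPolynomial.C c) = algebraMap ℂ (R7 ⧸ J) c := fun c => by
    rw [IsScalarTower.algebraMap_apply ℂ R7 (R7 ⧸ J), Ideal.Quotient.algebraMap_eq,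
      MvPolynomial.algebraMap_eq]
  have hπX : (fun s => π (MvPolynomial.X s))
      = fun s => algebraMap ℂ (R7 ⧸ J) (x s) + ε s := by
    funext s
    rw [← halg, hεdef]
    simp only
    rw [map_sub]
    ring
  have hmapG : (bigG f).map π = 0 := by
    ext k
    rw [coeff_map, coeff_zero, Ideal.Quotient.eq_zero_iff_mem]
    exact (le_sup_left : bigI f ≤ J) (Ideal.subset_span ⟨k, rfl⟩)
  rw [map_bigG f π halg, hπX] at hmapG
  set Pb := P.map (algebraMap ℂ (R7 ⧸ J)) with hPb
  set Qb := Q.map (algebraMap ℂ (R7 ⧸ J)) with hQb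
  set Pd := genP ε with hPd
  set Qd := genQ ε with hQd
  have hPbe : genP (fun s => algebraMap ℂ (R7 ⧸ J) (x s) + ε s) = Pb + Pd := by
    rw [genP_add, hPb, ← genP_pt P Q hP, map_genP]
  have hQbe : genQ (fun s => algebraMap ℂ (R7 ⧸ J) (x s) + ε s) = Qb + Qd := by
    rw [genQ_add, hQb, ← genQ_pt P Q hQ, map_genQ]
  rw [hPbe, hQbe] at hmapG
  have hfb : f.map (algebraMap ℂ (R7 ⧸ J)) = Pb ^ 2 - Qb ^ 3 := by
    rw [hf, Polynomial.map_sub, Polynomial.map_pow, Polynomial.map_pow]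
  rw [hfb] at hmapG
  have hPd2 : Pd * Pd = 0 := genP_mul_genP_eq_zero ε ε hε
  have hQd2 : Qd * Qd = 0 := genQ_mul_genQ_eq_zero ε ε hε
  have hmain : 2 * Pb * Pd = 3 * Qb ^ 2 * Qd := by
    linear_combination hmapG - hPd2 + (3 * Qb) * hQd2 + Qd * hQd2
  have hlam : ∀ lam : Module.Dual ℂ (R7 ⧸ J), ∀ s : σ7, lam (ε s) = 0 := by
    intro lam
    set Pl := genP (fun t => lam (ε t)) with hPl
    set Ql := genQ (fun t => lam (ε t)) with hQl
    have hPlc : ∀ n, Pl.coeff n = lam (Pd.coeff n) := by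
      intro n
      rw [hPl, hPd, coeff_genP, coeff_genP]
      split_ifs
      · rfl
      · simp
    have hQlc : ∀ n, Ql.coeff n = lam (Qd.coeff n) := by
      intro n
      rw [hQl, hQd, coeff_genQ, coeff_genQ]
      split_ifs
      · rfl
      · simp
    have hkey : 2 * P * Pl = 3 * Q ^ 2 * Ql := by
      ext k
      have h1 := lam_mul_coeff (2 * P) Pd Pl lam hPlc k
      have h2 := lam_mul_coeff (3 * Q ^ 2) Qd Ql lam hQlc k
      have e1 : (2 * P).map (algebraMap ℂ (R7 ⧸ J)) = 2 * Pb := by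
        rw [Polynomial.map_mul, Polynomial.map_ofNat]
      have e2 : (3 * Q ^ 2).map (algebraMap ℂ (R7 ⧸ J)) = 3 * Qb ^ 2 := by
        rw [Polynomial.map_mul, Polynomial.map_ofNat, Polynomial.map_pow]
      rw [show (2 : Polynomial ℂ) * P * Pl = (2 * P) * Pl from by ring,
        show (3 : Polynomial ℂ) * Q ^ 2 * Ql = (3 * Q ^ 2) * Ql from by ring,
        h1, h2, e1, e2]
      rw [show (2 * Pb) * Pd = 2 * Pb * Pd from by ring,
        show (3 * Qb ^ 2) * Qd = 3 * Qb ^ 2 * Qd from by ring, hmain]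
    obtain ⟨hPl0, hQl0⟩ := heart f P Q Pl Ql hdeg hsf hP hQ
      (natDegree_genP_le _) (natDegree_genQ_le _) hf hkey
    intro s
    cases s with
    | inl i =>
        have h0 : Pl.coeff (i : ℕ) = 0 := by rw [hPl0]; exact coeff_zero _
        rw [hPl, coeff_genP, dif_pos i.isLt] at h0
        simpa using h0
    | inr j =>
        have h0 : Ql.coeff (j : ℕ) = 0 := by rw [hQl0]; exact coeff_zero _
        rw [hQl, coeff_genQ, dif_pos j.isLt] at h0
        simpa using h0
  intro s
  exact (Module.forall_dual_apply_eq_zero_iff ℂ (ε s)).mp (fun lam => hlam lam s)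


lemma comap_map_ker (hP : P.natDegree ≤ 3) (hQ : Q.natDegree ≤ 2)
    (hf : f = P ^ 2 - Q ^ 3) :
    Ideal.comap (Ideal.Quotient.mk (bigI f))
      ((RingHom.ker (MvPolynomial.eval (pt P Q))).map (Ideal.Quotient.mk (bigI f)))
      = RingHom.ker (MvPolynomial.eval (pt P Q)) := by
  rw [Ideal.comap_map_of_surjective _ Ideal.Quotient.mk_surjective]
  rw [← RingHom.ker_eq_comap_bot, Ideal.mk_ker]
  exact sup_eq_left.mpr (bigI_le_ker f P Q hP hQ hf)

lemma point_mem_minimalPrimes (hdeg : f.natDegree = 6) (hsf : Squarefree f)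
    (hP : P.natDegree ≤ 3) (hQ : Q.natDegree ≤ 2) (hf : f = P ^ 2 - Q ^ 3) :
    (RingHom.ker (MvPolynomial.eval (pt P Q))).map (Ideal.Quotient.mk (bigI f))
      ∈ minimalPrimes (R7 ⧸ bigI f) := by
  set m : Ideal R7 := RingHom.ker (MvPolynomial.eval (pt P Q)) with hmdef
  set mA : Ideal (R7 ⧸ bigI f) := m.map (Ideal.Quotient.mk (bigI f)) with hmAdef
  haveI hmax : m.IsMaximal :=
    RingHom.ker_isMaximal_of_surjective _ (fun c => ⟨MvPolynomial.C c, MvPolynomial.eval_C _⟩)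
  have hsurj : Function.Surjective (Ideal.Quotient.mk (bigI f)) := Ideal.Quotient.mk_surjective
  have hcomap : Ideal.comap (Ideal.Quotient.mk (bigI f)) mA = m :=
    comap_map_ker f P Q hP hQ hf
  have hAne : mA ≠ ⊤ := by
    intro h
    rw [h, Ideal.comap_top] at hcomap
    exact hmax.ne_top hcomap.symm
  haveI hAmax : mA.IsMaximal := by
    rcases Ideal.map_eq_top_or_isMaximal_of_surjective _ hsurj hmax with h | h
    · exact absurd h hAne
    · exact h
  have hle : mA ≤ mA ^ 2 := by
    have h1 := Ideal.map_mono (f := Ideal.Quotient.mk (bigI f))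
      (ker_le_sup f P Q hdeg hsf hP hQ hf)
    rwa [Ideal.map_sup, Ideal.map_quotient_self, Ideal.map_pow, bot_sup_eq] at h1
  obtain ⟨r, hr1, hr0⟩ :=
    Submodule.exists_sub_one_mem_and_smul_eq_zero_of_fg_of_le_smul mA mA
      (IsNoetherian.noetherian _) (by rw [Ideal.smul_eq_mul]; exact le_trans hle (le_of_eq (pow_two mA)))
  constructor
  · exact ⟨hAmax.isPrime, bot_le⟩
  · rintro p ⟨hp, -⟩ hple n hn
    have h0 : r * n = 0 := by rw [← smul_eq_mul]; exact hr0 n hn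
    rcases hp.mem_or_mem (show r * n ∈ p from h0 ▸ p.zero_mem) with h | h
    · exfalso
      have hrm : r ∈ mA := hple h
      have h1 : (1 : R7 ⧸ bigI f) ∈ mA := by
        have := mA.sub_mem hrm hr1
        simpa using this
      exact hAne ((Ideal.eq_top_iff_one _).mpr h1)
    · exact h

end Stmt1Aux

open Stmt1Aux in
/-- A squarefree degree-6 polynomial over ℂ admits only finitely many decompositions
`f = P² - Q³` with `deg P ≤ 3`, `deg Q ≤ 2`. -/
theorem stmt1 (f : Polynomial ℂ) (hdeg : f.natDegree = 6) (hsf : Squarefree f) :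
    {PQ : Polynomial ℂ × Polynomial ℂ |
      PQ.1.degree ≤ 3 ∧ PQ.2.degree ≤ 2 ∧ f = PQ.1 ^ 2 - PQ.2 ^ 3}.Finite := by
  classical
  have hnat : ∀ {P : Polynomial ℂ}, P.degree ≤ 3 → P.natDegree ≤ 3 := fun h =>
    natDegree_le_iff_degree_le.mpr (by exact_mod_cast h)
  have hnat2 : ∀ {Q : Polynomial ℂ}, Q.degree ≤ 2 → Q.natDegree ≤ 2 := fun h =>
    natDegree_le_iff_degree_le.mpr (by exact_mod_cast h)
  apply Set.Finite.of_finite_image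
    (f := fun PQ : Polynomial ℂ × Polynomial ℂ =>
      (RingHom.ker (MvPolynomial.eval (pt PQ.1 PQ.2))).map (Ideal.Quotient.mk (bigI f)))
  · apply Set.Finite.subset (minimalPrimes.finite_of_isNoetherianRing (R7 ⧸ bigI f))
    rintro _ ⟨⟨P, Q⟩, hPQ, rfl⟩
    obtain ⟨h1, h2, h3⟩ := hPQ
    exact point_mem_minimalPrimes f P Q hdeg hsf (hnat h1) (hnat2 h2) h3
  · rintro ⟨P₁, Q₁⟩ h₁ ⟨P₂, Q₂⟩ h₂ heq
    obtain ⟨h11, h12, h13⟩ := h₁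
    obtain ⟨h21, h22, h23⟩ := h₂
    have hm : RingHom.ker (MvPolynomial.eval (pt P₁ Q₁))
        = RingHom.ker (MvPolynomial.eval (pt P₂ Q₂)) := by
      have c1 := comap_map_ker f P₁ Q₁ (hnat h11) (hnat2 h12) h13
      have c2 := comap_map_ker f P₂ Q₂ (hnat h21) (hnat2 h22) h23
      rw [← c1, ← c2]
      simp only at heq
      rw [heq]
    have hx : pt P₁ Q₁ = pt P₂ Q₂ := by
      funext s
      have hmem : MvPolynomial.X s - MvPolynomial.C (pt P₁ Q₁ s)
          ∈ RingHom.ker (MvPolynomial.eval (pt P₁ Q₁)) := by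
        rw [RingHom.mem_ker, map_sub, MvPolynomial.eval_X, MvPolynomial.eval_C, sub_self]
      rw [hm, RingHom.mem_ker, map_sub, MvPolynomial.eval_X, MvPolynomial.eval_C,
        sub_eq_zero] at hmem
      exact hmem.symm
    have hP : P₁ = P₂ := by
      rw [← genP_pt P₁ Q₁ (hnat h11), ← genP_pt P₂ Q₂ (hnat h21), hx]
    have hQ : Q₁ = Q₂ := by
      rw [← genQ_pt P₁ Q₁ (hnat2 h12), ← genQ_pt P₂ Q₂ (hnat2 h22), hx]
    simp [hP, hQ]
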